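/- Let n ≥ 2 and let A be an n×n matrix with nonnegative integer entries and det(A) = ±1. Suppose that the first column of B = A⁻¹ has exactly two nonzero entries, b_{i1} and b_{j1} with i ≠ j. Then b_{i1} and b_{j1} have opposite signs. -/
import Mathlib


open Matrix

/-- Let `n ≥ 2` and let `A` be an `n × n` matrix with nonnegative integer entries and
`det A = ±1`.  If the first column of `B = A⁻¹` (the integer inverse of `A`) has exactly
two nonzero entries `b_{i1}` and `b_{j1}` with `i ≠ j`, then `b_{i1}` and `b_{j1}` have
opposite signs, i.e. `b_{i1} · b_{j1} < 0`. -/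
theorem opposite_signs_of_two_nonzero_entries {n : ℕ} [NeZero n] (hn : 2 ≤ n)
    (A : Matrix (Fin n) (Fin n) ℤ) (hA : ∀ i j, 0 ≤ A i j)
    (hdet : A.det = 1 ∨ A.det = -1)
    (i j : Fin n) (hij : i ≠ j)
    (hi : A⁻¹ i 0 ≠ 0) (hj : A⁻¹ j 0 ≠ 0)
    (hzero : ∀ l : Fin n, l ≠ i → l ≠ j → A⁻¹ l 0 = 0) :
    A⁻¹ i 0 * A⁻¹ j 0 < 0 := by
  have hunit : IsUnit A.det := by
    rcases hdet with h | h <;> rw [h]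
    · exact isUnit_one
    · exact isUnit_one.neg
  have heq : A * A⁻¹ = 1 := Matrix.mul_nonsing_inv A hunit
  have key : ∀ k : Fin n, A k i * A⁻¹ i 0 + A k j * A⁻¹ j 0 =
      if k = (0 : Fin n) then 1 else 0 := by
    intro k
    have h1 := congrFun (congrFun heq k) 0
    rw [Matrix.mul_apply, Matrix.one_apply] at h1
    have h2 : ∑ l, A k l * A⁻¹ l 0 = ∑ l ∈ ({i, j} : Finset (Fin n)), A k l * A⁻¹ l 0 := by
      refine (Finset.sum_subset (Finset.subset_univ _) ?_).symm
      intro l _ hl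
      simp only [Finset.mem_insert, Finset.mem_singleton, not_or] at hl
      rw [hzero l hl.1 hl.2, mul_zero]
    rw [h2, Finset.sum_pair hij] at h1
    exact h1
  have hdet0 : A.det ≠ 0 := by
    rcases hdet with h | h <;> rw [h] <;> decide
  by_contra hcon
  push_neg at hcon
  have hne : A⁻¹ i 0 * A⁻¹ j 0 ≠ 0 := mul_ne_zero hi hj
  have hpos : 0 < A⁻¹ i 0 * A⁻¹ j 0 := lt_of_le_of_ne hcon (Ne.symm hne)
  rcases mul_pos_iff.mp hpos with ⟨hbi, hbj⟩ | ⟨hbi, hbj⟩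
  · -- both positive
    have h0 := key 0
    simp only [if_pos rfl, if_true] at h0
    have hbi1 : 1 ≤ A⁻¹ i 0 := hbi
    have hbj1 : 1 ≤ A⁻¹ j 0 := hbj
    have hsum : A 0 i + A 0 j ≤ 1 := by nlinarith [hA 0 i, hA 0 j]
    have hdisj : A 0 i = 0 ∨ A 0 j = 0 := by
      by_contra h
      push_neg at h
      have h1 : 1 ≤ A 0 i := lt_of_le_of_ne (hA 0 i) (Ne.symm h.1)
      have h2 : 1 ≤ A 0 j := lt_of_le_of_ne (hA 0 j) (Ne.symm h.2)
      omega
    have hcolzero : ∀ k : Fin n, k ≠ (0 : Fin n) → A k i = 0 ∧ A k j = 0 := by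
      intro k hk
      have hk' := key k
      rw [if_neg hk] at hk'
      have t1 : 0 ≤ A k i * A⁻¹ i 0 := mul_nonneg (hA k i) (le_of_lt hbi)
      have t2 : 0 ≤ A k j * A⁻¹ j 0 := mul_nonneg (hA k j) (le_of_lt hbj)
      have e1 : A k i * A⁻¹ i 0 = 0 := by linarith
      have e2 : A k j * A⁻¹ j 0 = 0 := by linarith
      exact ⟨by
        rcases mul_eq_zero.mp e1 with h | h
        · exact h
        · exact absurd h hi, by
        rcases mul_eq_zero.mp e2 with h | h
        · exact h
        · exact absurd h hj⟩
    rcases hdisj with h | h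
    · have : A.det = 0 := Matrix.det_eq_zero_of_column_eq_zero i (fun k => by
        by_cases hk : k = (0 : Fin n)
        · rw [hk]; exact h
        · exact (hcolzero k hk).1)
      exact hdet0 this
    · have : A.det = 0 := Matrix.det_eq_zero_of_column_eq_zero j (fun k => by
        by_cases hk : k = (0 : Fin n)
        · rw [hk]; exact h
        · exact (hcolzero k hk).2)
      exact hdet0 this
  · -- both negative
    have h0 := key 0
    simp only [if_pos rfl, if_true] at h0
    have t1 : A 0 i * A⁻¹ i 0 ≤ 0 := mul_nonpos_of_nonneg_of_nonpos (hA 0 i) (le_of_lt hbi)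
    have t2 : A 0 j * A⁻¹ j 0 ≤ 0 := mul_nonpos_of_nonneg_of_nonpos (hA 0 j) (le_of_lt hbj)
    linarith
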